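/- Let n ≥ 1, let g : ℝ → M_n(ℝ) be differentiable and Γ : ℝ → M_n(ℝ) be such that for all t: Γ(t)ᵀ = −Γ(t), g(t)ᵀ = g(t), and g'(t) = g(t)Γ(t) + (g(t)Γ(t))ᵀ. Then for every natural number k, the function t ↦ tr(g(t)^k) is constant on ℝ; in particular the trace of g(t) is constant. -/

import Mathlib

open Matrix

/- STATEMENT 4: For skew-symmetric Γ(t) and symmetric g(t) with
g'(t) = g(t)Γ(t) + (g(t)Γ(t))ᵀ, all traces tr(g(t)^k) are constant;
in particular the trace of g(t) is constant. -/
theorem traces_of_powers_constant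
    (n : ℕ) (hn : 1 ≤ n)
    (g Γ : ℝ → Matrix (Fin n) (Fin n) ℝ)
    (hΓskew : ∀ t, (Γ t)ᵀ = -Γ t)
    (hgsymm : ∀ t, (g t)ᵀ = g t)
    (hg : ∀ (t : ℝ) (i j : Fin n),
      HasDerivAt (fun s => g s i j) ((g t * Γ t + (g t * Γ t)ᵀ) i j) t) :
    (∀ (k : ℕ) (s t : ℝ), (g s ^ k).trace = (g t ^ k).trace)
    ∧ (∀ s t : ℝ, (g s).trace = (g t).trace) := by
  -- The derivative of g is the commutator g Γ - Γ g.
  have hg' : ∀ (t : ℝ) (i j : Fin n),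
      HasDerivAt (fun s => g s i j) ((g t * Γ t - Γ t * g t) i j) t := by
    intro t i j
    have := hg t i j
    have heq : g t * Γ t + (g t * Γ t)ᵀ = g t * Γ t - Γ t * g t := by
      rw [Matrix.transpose_mul, hΓskew, hgsymm]
      simp [sub_eq_add_neg, Matrix.neg_mul]
    rwa [heq] at this
  -- Derivative of powers: d/dt g^k = g^k Γ - Γ g^k.
  have hpow : ∀ (k : ℕ) (t : ℝ) (i j : Fin n),
      HasDerivAt (fun s => (g s ^ k) i j)
        ((g t ^ k * Γ t - Γ t * g t ^ k) i j) t := by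
    intro k
    induction k with
    | zero =>
      intro t i j
      have : (((1 : Matrix (Fin n) (Fin n) ℝ) * Γ t - Γ t * 1) : Matrix (Fin n) (Fin n) ℝ) i j = 0 := by
        simp
      simp only [pow_zero, this]
      exact hasDerivAt_const t _
    | succ k ih =>
      intro t i j
      have h1 : ∀ s : ℝ, (g s ^ (k + 1)) i j
          = ∑ l : Fin n, (g s ^ k) i l * g s l j := by
        intro s
        rw [pow_succ, Matrix.mul_apply]
      have h2 : HasDerivAt (fun s => ∑ l : Fin n, (g s ^ k) i l * g s l j)
          (∑ l : Fin n, ((g t ^ k * Γ t - Γ t * g t ^ k) i l * g t l j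
            + (g t ^ k) i l * (g t * Γ t - Γ t * g t) l j)) t := by
        apply HasDerivAt.fun_sum
        intro l _
        exact (ih t i l).mul (hg' t l j)
      have h3 : (∑ l : Fin n, ((g t ^ k * Γ t - Γ t * g t ^ k) i l * g t l j
            + (g t ^ k) i l * (g t * Γ t - Γ t * g t) l j))
          = ((g t ^ (k + 1)) * Γ t - Γ t * g t ^ (k + 1)) i j := by
        rw [show ((g t ^ (k + 1)) * Γ t - Γ t * g t ^ (k + 1))
            = (g t ^ k * Γ t - Γ t * g t ^ k) * g t
              + g t ^ k * (g t * Γ t - Γ t * g t) by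
          rw [pow_succ]; noncomm_ring]
        rw [Matrix.add_apply, Matrix.mul_apply, Matrix.mul_apply,
          ← Finset.sum_add_distrib]
      rw [h3] at h2
      exact h2.congr_deriv rfl |>.congr_of_eventuallyEq
        (Filter.Eventually.of_forall fun s => (h1 s).symm)
  -- Derivative of trace of powers is zero.
  have htr : ∀ (k : ℕ) (t : ℝ),
      HasDerivAt (fun s => (g s ^ k).trace) 0 t := by
    intro k t
    have h : HasDerivAt (fun s => ∑ i : Fin n, (g s ^ k) i i)
        (∑ i : Fin n, (g t ^ k * Γ t - Γ t * g t ^ k) i i) t := by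
      apply HasDerivAt.fun_sum
      intro i _
      exact hpow k t i i
    have hz : (∑ i : Fin n, (g t ^ k * Γ t - Γ t * g t ^ k) i i) = 0 := by
      have : (g t ^ k * Γ t - Γ t * g t ^ k).trace = 0 := by
        rw [Matrix.trace_sub, Matrix.trace_mul_comm, sub_self]
      simpa [Matrix.trace, Matrix.diag] using this
    rw [hz] at h
    exact h.congr_of_eventuallyEq
      (Filter.Eventually.of_forall fun s => by
        simp [Matrix.trace, Matrix.diag])
  have hconst : ∀ (k : ℕ) (s t : ℝ), (g s ^ k).trace = (g t ^ k).trace := by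
    intro k s t
    exact is_const_of_deriv_eq_zero (f := fun s => (g s ^ k).trace)
      (fun x => (htr k x).differentiableAt) (fun x => (htr k x).deriv) s t
  refine ⟨hconst, fun s t => ?_⟩
  have := hconst 1 s t
  simpa using this
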